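/- Let C = {c_1,…,c_m} be candidate locations, E = {e_1,…,e_n} expert locations in a normed vector space, q ∈ ℝ^m the true candidate qualities, and ≻^k a top-k ranking profile consistent with q. Then for every candidate j*, the regret of selecting j* satisfies max_{j∈[m]} q_j − q_{j*} ≤ max_{j∈[m]} d_G(j*, j), where d_G is the shortest directed path distance in G(C, E, ≻^k). -/
import Mathlib


open scoped Classical

section VotingDefs

variable {V : Type*} [NormedAddCommGroup V] [NormedSpace ℝ V]

/-- An expert with top-`k` ranking `pref : Fin k → Fin m` prefers candidate `j` to `j'`:
`j` is ranked at some position `h`, and `j'` is either unranked or ranked strictly later. -/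
def Prefers {k m : ℕ} (pref : Fin k → Fin m) (j j' : Fin m) : Prop :=
  ∃ h : Fin k, pref h = j ∧
    ((∀ h' : Fin k, pref h' ≠ j') ∨ ∃ h' : Fin k, pref h' = j' ∧ h < h')

/-- `q` is consistent with the profile `pref` of top-`k` rankings, given candidate
locations `c` and expert locations `e`. -/
def Consistent {n k m : ℕ} (c : Fin m → V) (e : Fin n → V)
    (pref : Fin n → Fin k → Fin m) (q : Fin m → ℝ) : Prop :=
  ∀ (i : Fin n) (j j' : Fin m), Prefers (pref i) j j' →
    q j' - ‖e i - c j'‖ ≤ q j - ‖e i - c j‖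

/-- Edge relation of the graph `G(C, E, ≻^k)`. -/
def HasEdge {n k m : ℕ} (pref : Fin n → Fin k → Fin m) (j j' : Fin m) : Prop :=
  ∃ i : Fin n, Prefers (pref i) j j'

/-- Weight of the edge `j → j'` in `G(C, E, ≻^k)`: the minimum of
`‖e i - c j'‖ - ‖e i - c j‖` over experts `i` preferring `j` to `j'`. -/
noncomputable def weightG {n k m : ℕ} (c : Fin m → V) (e : Fin n → V)
    (pref : Fin n → Fin k → Fin m) (j j' : Fin m) : ℝ :=
  sInf {x : ℝ | ∃ i : Fin n, Prefers (pref i) j j' ∧ x = ‖e i - c j'‖ - ‖e i - c j‖}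

/-- A directed walk along `edge` from `g` to `h`, recorded as its list of vertices. -/
def IsWalk {α : Type*} (edge : α → α → Prop) (l : List α) (g h : α) : Prop :=
  l.Chain' edge ∧ l.head? = some g ∧ l.getLast? = some h

/-- Total weight of a walk (sum of the weights of consecutive pairs). -/
noncomputable def walkWeight {α : Type*} (w : α → α → ℝ) (l : List α) : ℝ :=
  ((l.zip l.tail).map fun p => w p.1 p.2).sum

/-- Shortest directed path distance; `+∞` if there is no directed path. -/
noncomputable def distG {α : Type*} (edge : α → α → Prop) (w : α → α → ℝ) (g h : α) : EReal :=
  sInf {x : EReal | ∃ l : List α, IsWalk edge l g h ∧ x = ((walkWeight w l : ℝ) : EReal)}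

/-- Distance (number of edges) in an unweighted directed graph; `⊤` if unreachable. -/
noncomputable def hopDist {α : Type*} (edge : α → α → Prop) (g h : α) : ℕ∞ :=
  sInf {x : ℕ∞ | ∃ l : List α, IsWalk edge l g h ∧ x = ((l.length - 1 : ℕ) : ℕ∞)}

/-- `diam(G, S)`: the longest shortest-path length between two vertices of `S`. -/
noncomputable def diamS {α : Type*} (edge : α → α → Prop) (S : Set α) : ℕ∞ :=
  ⨆ (u : α) (_ : u ∈ S) (v : α) (_ : v ∈ S), hopDist edge u v

/-- Edge relation of the unweighted graph `G(C, E, ≻^k)[δ]`. -/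
def EdgeDelta {n k m : ℕ} (e : Fin n → V) (pref : Fin n → Fin k → Fin m) (δ : ℝ)
    (j j' : Fin m) : Prop :=
  ∃ i i' : Fin n, Prefers (pref i) j j' ∧ Prefers (pref i') j' j ∧ ‖e i - e i'‖ ≤ δ

/-- Minimum cardinality of an internal `δ`-cover of `Θ`; `⊤` if no finite cover exists. -/
noncomputable def coverNum (Θ : Set V) (δ : ℝ) : ℕ∞ :=
  sInf {x : ℕ∞ | ∃ X : Finset V, ↑X ⊆ Θ ∧ (∀ θ ∈ Θ, ∃ v ∈ X, ‖θ - v‖ ≤ δ) ∧ x = (X.card : ℕ∞)}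

end VotingDefs

/-- If the true qualities `q` are consistent with the reported top-`k`
profile, then the regret of selecting any candidate `j*` is at most
`max_{j} d_G(j*, j)` in `G(C, E, ≻^k)`. -/
theorem statement1 {V : Type*} [NormedAddCommGroup V] [NormedSpace ℝ V]
    {n k m : ℕ} (c : Fin m → V) (e : Fin n → V) (q : Fin m → ℝ)
    (pref : Fin n → Fin k → Fin m)
    (hinj : ∀ i, Function.Injective (pref i))
    (hcons : Consistent c e pref q)
    (jstar : Fin m) :
    (⨆ j : Fin m, ((q j - q jstar : ℝ) : EReal)) ≤
      ⨆ j : Fin m, distG (HasEdge pref) (weightG c e pref) jstar j := by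
  -- edge lemma
  have hedge : ∀ a b : Fin m, HasEdge pref a b → q b - q a ≤ weightG c e pref a b := by
    rintro a b ⟨i, hi⟩
    refine le_csInf ⟨‖e i - c b‖ - ‖e i - c a‖, ⟨i, hi, rfl⟩⟩ ?_
    
    rintro x ⟨i', hi', rfl⟩
    have := hcons i' a b hi'
    linarith
  -- walk lemma
  have hwalk : ∀ (l : List (Fin m)) (g h : Fin m),
      l.Chain' (HasEdge pref) → l.head? = some g → l.getLast? = some h →
      q h - q g ≤ walkWeight (weightG c e pref) l := by
    intro l
    induction l with
    | nil => intro g h _ hg _; simp at hg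
    | cons a t ih =>
      intro g h hch hg hl
      cases t with
      | nil =>
        simp at hg hl
        subst hg; subst hl
        simp [walkWeight]
      | cons b t' =>
        have hab : HasEdge pref a b := (List.isChain_cons_cons.mp hch).1
        have hch' : (b :: t').Chain' (HasEdge pref) := (List.isChain_cons_cons.mp hch).2
        have hga : g = a := by simpa using hg.symm
        have hl' : (b :: t').getLast? = some h := by
          rw [← hl]; simp [List.getLast?_cons_cons]
        have ihb := ih b h hch' rfl hl'
        have he := hedge a b hab
        have hw : walkWeight (weightG c e pref) (a :: b :: t') =
            weightG c e pref a b + walkWeight (weightG c e pref) (b :: t') := by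
          simp [walkWeight]
        rw [hga, hw]
        linarith
  refine iSup_le fun j => le_trans ?_ (le_iSup _ j)
  refine le_sInf ?_
  rintro x ⟨l, ⟨hch, hg, hl⟩, rfl⟩
  exact_mod_cast hwalk l jstar j hch hg hl
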